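/- Strong duality for the inner nature-minimization problem: let S be a finite set, l, u, x : S → ℝ with the set H = {h | l ≤ h ≤ u, ∑_s h(s) = 1} nonempty. Then min_{h∈H} ∑_s h(s)·x(s) equals max over (γ₁ ∈ ℝ, γ₂, γ₃ : S → ℝ with γ₂, γ₃ ≥ 0 and x(s) − γ₂(s) + γ₃(s) − γ₁ = 0 for all s) of γ₁ + ∑_s l(s)·γ₂(s) − ∑_s u(s)·γ₃(s). -/
import Mathlib

lemma weak_dual {S : Type*} [Fintype S] (l u x : S → ℝ) (h : S → ℝ)
    (hl : ∀ s, l s ≤ h s) (hu : ∀ s, h s ≤ u s) (hs : ∑ s, h s = 1)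
    (γ₁ : ℝ) (γ₂ γ₃ : S → ℝ) (h2 : ∀ s, 0 ≤ γ₂ s) (h3 : ∀ s, 0 ≤ γ₃ s)
    (hc : ∀ s, x s - γ₂ s + γ₃ s - γ₁ = 0) :
    γ₁ + ∑ s, l s * γ₂ s - ∑ s, u s * γ₃ s ≤ ∑ s, h s * x s := by
  have e0 : ∑ s, h s * x s = γ₁ + (∑ s, h s * γ₂ s - ∑ s, h s * γ₃ s) := by
    have hpt : ∀ s, h s * x s = γ₁ * h s + (h s * γ₂ s - h s * γ₃ s) := by
      intro s
      have hxs : x s = γ₁ + γ₂ s - γ₃ s := by linarith [hc s]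
      rw [hxs]; ring
    rw [Finset.sum_congr rfl fun s _ => hpt s, Finset.sum_add_distrib,
      Finset.sum_sub_distrib, ← Finset.mul_sum, hs, mul_one]
  have e1 : ∑ s, l s * γ₂ s ≤ ∑ s, h s * γ₂ s :=
    Finset.sum_le_sum fun s _ => mul_le_mul_of_nonneg_right (hl s) (h2 s)
  have e2 : ∑ s, h s * γ₃ s ≤ ∑ s, u s * γ₃ s :=
    Finset.sum_le_sum fun s _ => mul_le_mul_of_nonneg_right (hu s) (h3 s)
  linarith

/-- Strong LP duality for the inner nature-minimization problem over the
interval-distribution polytope. -/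
theorem inner_minimization_strong_duality (S : Type*) [Fintype S]
    (l u x : S → ℝ)
    (hne : ({h : S → ℝ | (∀ s, l s ≤ h s) ∧ (∀ s, h s ≤ u s) ∧ ∑ s, h s = 1}).Nonempty) :
    sInf {v : ℝ | ∃ h : S → ℝ, (∀ s, l s ≤ h s) ∧ (∀ s, h s ≤ u s) ∧ (∑ s, h s = 1) ∧
        v = ∑ s, h s * x s} =
    sSup {v : ℝ | ∃ (γ₁ : ℝ) (γ₂ γ₃ : S → ℝ), (∀ s, 0 ≤ γ₂ s) ∧ (∀ s, 0 ≤ γ₃ s) ∧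
        (∀ s, x s - γ₂ s + γ₃ s - γ₁ = 0) ∧
        v = γ₁ + ∑ s, l s * γ₂ s - ∑ s, u s * γ₃ s} := by
  classical
  obtain ⟨h₀, hl₀, hu₀, hs₀⟩ := hne
  have hlu : ∀ s, l s ≤ u s := fun s => (hl₀ s).trans (hu₀ s)
  have hXne : (Finset.image x Finset.univ).Nonempty := by
    rcases (Finset.univ : Finset S).eq_empty_or_nonempty with h | h
    · exfalso; rw [h, Finset.sum_empty] at hs₀; norm_num at hs₀
    · exact h.image x
  have hl1 : ∑ s, l s ≤ 1 := hs₀ ▸ Finset.sum_le_sum fun s _ => hl₀ s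
  have hu1 : (1:ℝ) ≤ ∑ s, u s := hs₀ ▸ Finset.sum_le_sum fun s _ => hu₀ s
  set B : ℝ → ℝ := fun a => ∑ s, if x s ≤ a then u s else l s with hB
  have hBt : ∀ a, B a = ∑ s, if x s ≤ a then u s else l s := fun a => rfl
  set T : Finset ℝ := (Finset.image x Finset.univ).filter (fun a => 1 ≤ B a) with hT
  have hTne : T.Nonempty := by
    refine ⟨(Finset.image x Finset.univ).max' hXne, Finset.mem_filter.mpr
      ⟨(Finset.image x Finset.univ).max'_mem hXne, ?_⟩⟩
    have hmax : B ((Finset.image x Finset.univ).max' hXne) = ∑ s, u s := by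
      rw [hBt]
      exact Finset.sum_congr rfl fun s _ =>
        if_pos (Finset.le_max' _ _ (Finset.mem_image_of_mem x (Finset.mem_univ s)))
    rw [hmax]; exact hu1
  set t : ℝ := T.min' hTne with ht
  have htT : t ∈ T := T.min'_mem hTne
  have htB : 1 ≤ B t := (Finset.mem_filter.mp htT).2
  set A : ℝ := ∑ s, if x s < t then u s else l s with hA
  have hA1 : A ≤ 1 := by
    by_cases hlt : ∃ s, x s < t
    · set X' : Finset ℝ := (Finset.image x Finset.univ).filter (fun a => a < t) with hX'
      have hX'ne : X'.Nonempty := by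
        obtain ⟨s, hs⟩ := hlt
        refine ⟨x s, ?_⟩
        rw [hX', Finset.mem_filter]
        exact ⟨Finset.mem_image_of_mem x (Finset.mem_univ s), hs⟩
      set t' : ℝ := X'.max' hX'ne with ht'
      have ht'X' : t' ∈ X' := X'.max'_mem hX'ne
      have ht'lt : t' < t := (Finset.mem_filter.mp ht'X').2
      have hiff : ∀ s, x s < t ↔ x s ≤ t' := by
        intro s
        constructor
        · intro hx
          refine Finset.le_max' _ _ ?_
          rw [hX', Finset.mem_filter]
          exact ⟨Finset.mem_image_of_mem x (Finset.mem_univ s), hx⟩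
        · intro hx; exact lt_of_le_of_lt hx ht'lt
      have hAB : A = B t' := by
        rw [hA, hBt]
        refine Finset.sum_congr rfl fun s _ => ?_
        by_cases hx : x s < t
        · rw [if_pos hx, if_pos ((hiff s).mp hx)]
        · rw [if_neg hx, if_neg (fun h' => hx ((hiff s).mpr h'))]
      have hBt' : ¬ (1 ≤ B t') := by
        intro hge
        have ht'T : t' ∈ T := Finset.mem_filter.mpr ⟨(Finset.mem_filter.mp ht'X').1, hge⟩
        exact absurd (T.min'_le _ ht'T) (not_le.mpr ht'lt)
      rw [hAB]; linarith [lt_of_not_ge hBt']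
    · push_neg at hlt
      have hAl : A = ∑ s, l s := by
        rw [hA]; exact Finset.sum_congr rfl fun s _ => if_neg (not_lt.mpr (hlt s))
      rw [hAl]; exact hl1
  set C : ℝ := ∑ s, if x s = t then u s - l s else 0 with hC
  have hBAC : B t - A = C := by
    rw [hBt t, hA, hC, ← Finset.sum_sub_distrib]
    refine Finset.sum_congr rfl fun s _ => ?_
    rcases lt_trichotomy (x s) t with h | h | h
    · rw [if_pos h.le, if_pos h, if_neg h.ne, sub_self]
    · rw [if_pos h.le, if_neg (by rw [h]; exact lt_irrefl t), if_pos h]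
    · rw [if_neg (not_le.mpr h), if_neg (not_lt.mpr h.le), if_neg h.ne', sub_self]
  have hC0 : 0 ≤ C := by
    rw [hC]
    refine Finset.sum_nonneg fun s _ => ?_
    split_ifs with h
    · exact sub_nonneg.mpr (hlu s)
    · exact le_refl 0
  set M : ℝ := 1 - A with hM
  have hM0 : 0 ≤ M := by rw [hM]; linarith
  have hMC : M ≤ C := by rw [hM, ← hBAC]; linarith
  set r : ℝ := if C = 0 then 0 else M / C with hr
  have hr0 : 0 ≤ r := by
    rw [hr]; split_ifs with h0
    · exact le_refl 0
    · exact div_nonneg hM0 hC0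
  have hr1 : r ≤ 1 := by
    rw [hr]; split_ifs with h0
    · norm_num
    · exact (div_le_one (lt_of_le_of_ne hC0 (Ne.symm h0))).mpr hMC
  have hrC : r * C = M := by
    rw [hr]; split_ifs with h0
    · rw [zero_mul]
      have hM0' := hMC
      rw [h0] at hM0'
      linarith
    · field_simp
  set f : S → ℝ := fun s => if x s < t then u s else if x s = t then l s + r * (u s - l s) else l s
    with hf
  have hfl : ∀ s, l s ≤ f s := by
    intro s; rw [hf]; dsimp only
    split_ifs with h1 h2
    · exact hlu s
    · have := mul_nonneg hr0 (sub_nonneg.mpr (hlu s)); linarith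
    · exact le_refl _
  have hfu : ∀ s, f s ≤ u s := by
    intro s; rw [hf]; dsimp only
    split_ifs with h1 h2
    · exact le_refl _
    · have := mul_le_mul_of_nonneg_right hr1 (sub_nonneg.mpr (hlu s)); linarith
    · exact hlu s
  have hfpt : ∀ s, f s = (if x s < t then u s else l s) + r * (if x s = t then u s - l s else 0) := by
    intro s; rw [hf]; dsimp only
    rcases lt_trichotomy (x s) t with h | h | h
    · rw [if_pos h, if_pos h, if_neg h.ne, mul_zero, add_zero]
    · have hn : ¬ x s < t := by rw [h]; exact lt_irrefl t
      rw [if_neg hn, if_neg hn, if_pos h, if_pos h]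
    · rw [if_neg (not_lt.mpr h.le), if_neg (not_lt.mpr h.le), if_neg h.ne', if_neg h.ne',
        mul_zero, add_zero]
  have hfsum : ∑ s, f s = 1 := by
    calc ∑ s, f s
        = ∑ s, ((if x s < t then u s else l s) + r * (if x s = t then u s - l s else 0)) :=
          Finset.sum_congr rfl fun s _ => hfpt s
      _ = A + r * C := by rw [Finset.sum_add_distrib, ← Finset.mul_sum, ← hA, ← hC]
      _ = 1 := by rw [hrC, hM]; ring
  set γ₂ : S → ℝ := fun s => max (x s - t) 0 with hγ₂
  set γ₃ : S → ℝ := fun s => max (t - x s) 0 with hγ₃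
  have hg2 : ∀ s, 0 ≤ γ₂ s := fun s => le_max_right _ _
  have hg3 : ∀ s, 0 ≤ γ₃ s := fun s => le_max_right _ _
  have hcon : ∀ s, x s - γ₂ s + γ₃ s - t = 0 := by
    intro s
    rcases le_total (x s) t with h | h
    · rw [hγ₂, hγ₃]; dsimp only
      rw [max_eq_right (by linarith), max_eq_left (by linarith)]; ring
    · rw [hγ₂, hγ₃]; dsimp only
      rw [max_eq_left (by linarith), max_eq_right (by linarith)]; ring
  have hval : ∑ s, f s * x s = t + ∑ s, l s * γ₂ s - ∑ s, u s * γ₃ s := by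
    have key : ∀ s, f s * x s = t * f s + (l s * γ₂ s - u s * γ₃ s) := by
      intro s
      rw [hf, hγ₂, hγ₃]; dsimp only
      rcases lt_trichotomy (x s) t with h | h | h
      · rw [if_pos h, max_eq_right (by linarith), max_eq_left (by linarith)]; ring
      · have e2 : max (x s - t) 0 = 0 := max_eq_right (by linarith)
        have e3 : max (t - x s) 0 = 0 := max_eq_right (by linarith)
        have hn : ¬ x s < t := by rw [h]; exact lt_irrefl t
        rw [if_neg hn, if_pos h, e2, e3, h]; ring
      · rw [if_neg (not_lt.mpr h.le), if_neg h.ne', max_eq_left (by linarith),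
          max_eq_right (by linarith)]; ring
    calc ∑ s, f s * x s
        = ∑ s, (t * f s + (l s * γ₂ s - u s * γ₃ s)) :=
          Finset.sum_congr rfl fun s _ => key s
      _ = t * ∑ s, f s + (∑ s, l s * γ₂ s - ∑ s, u s * γ₃ s) := by
          rw [Finset.sum_add_distrib, ← Finset.mul_sum, Finset.sum_sub_distrib]
      _ = _ := by rw [hfsum]; ring
  have hVP : (∑ s, f s * x s) ∈ {v : ℝ | ∃ h : S → ℝ, (∀ s, l s ≤ h s) ∧ (∀ s, h s ≤ u s) ∧
      (∑ s, h s = 1) ∧ v = ∑ s, h s * x s} := ⟨f, hfl, hfu, hfsum, rfl⟩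
  have hVD : (∑ s, f s * x s) ∈ {v : ℝ | ∃ (γ₁ : ℝ) (γ₂ γ₃ : S → ℝ), (∀ s, 0 ≤ γ₂ s) ∧
      (∀ s, 0 ≤ γ₃ s) ∧ (∀ s, x s - γ₂ s + γ₃ s - γ₁ = 0) ∧
      v = γ₁ + ∑ s, l s * γ₂ s - ∑ s, u s * γ₃ s} := ⟨t, γ₂, γ₃, hg2, hg3, hcon, hval⟩
  have hlow : ∀ p ∈ {v : ℝ | ∃ h : S → ℝ, (∀ s, l s ≤ h s) ∧ (∀ s, h s ≤ u s) ∧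
      (∑ s, h s = 1) ∧ v = ∑ s, h s * x s}, (∑ s, f s * x s) ≤ p := by
    rintro p ⟨h, h1, h2, h3, rfl⟩
    rw [hval]
    exact weak_dual l u x h h1 h2 h3 t γ₂ γ₃ hg2 hg3 hcon
  have hhigh : ∀ d ∈ {v : ℝ | ∃ (γ₁ : ℝ) (γ₂ γ₃ : S → ℝ), (∀ s, 0 ≤ γ₂ s) ∧
      (∀ s, 0 ≤ γ₃ s) ∧ (∀ s, x s - γ₂ s + γ₃ s - γ₁ = 0) ∧
      v = γ₁ + ∑ s, l s * γ₂ s - ∑ s, u s * γ₃ s}, d ≤ ∑ s, f s * x s := by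
    rintro d ⟨γ₁, g2, g3, k2, k3, kc, rfl⟩
    exact weak_dual l u x f hfl hfu hfsum γ₁ g2 g3 k2 k3 kc
  refine le_antisymm ?_ ?_
  · exact le_trans (csInf_le ⟨_, hlow⟩ hVP) (le_csSup ⟨_, hhigh⟩ hVD)
  · exact le_trans (csSup_le ⟨_, hVD⟩ hhigh) (le_csInf ⟨_, hVP⟩ hlow)
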